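/- Let r₁, r₂, r₃ ≥ 1 and let H₁ be the join of the complete graph K_{r₁} with the disjoint union K_{r₂} ⊔ K_{r₃}. Then the characteristic polynomial of ε(H₁) equals x^{r₂+r₃−2}·(x+1)^{r₁−1}·(x³ − (r₁−1)x² − (r₁r₂ + r₁r₃ + 4r₂r₃)x − 4r₂r₃). -/

import Mathlib

open Finset Polynomial

noncomputable def ecc {V : Type*} [Fintype V] (G : SimpleGraph V) (u : V) : ℕ :=
  Finset.univ.sup (G.dist u)

noncomputable def eccMatrix {V : Type*} [Fintype V] (G : SimpleGraph V) :
    Matrix V V ℝ := fun u v =>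
  if G.dist u v = min (ecc G u) (ecc G v) then (G.dist u v : ℝ) else 0

theorem eccMatrix_isHermitian {V : Type*} [Fintype V] (G : SimpleGraph V) :
    (eccMatrix G).IsHermitian := by
  unfold Matrix.IsHermitian
  ext u v
  simp only [Matrix.conjTranspose_apply, eccMatrix, star_trivial]
  rw [SimpleGraph.dist_comm, min_comm]

/-- Number of positive eigenvalues (with multiplicity) of a real symmetric matrix. -/
noncomputable def posEigCount {V : Type*} [Fintype V] [DecidableEq V]
    {A : Matrix V V ℝ} (hA : A.IsHermitian) : ℕ :=
  (Finset.univ.filter fun i => 0 < hA.eigenvalues i).card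

/-- The join of two simple graphs: disjoint union plus all edges in between. -/
def graphJoin {α β : Type*} (G : SimpleGraph α) (H : SimpleGraph β) :
    SimpleGraph (α ⊕ β) where
  Adj x y := match x, y with
    | Sum.inl a, Sum.inl b => G.Adj a b
    | Sum.inr a, Sum.inr b => H.Adj a b
    | _, _ => True
  symm := ⟨by rintro (a|a) (b|b) h <;> first | exact G.adj_symm h | exact H.adj_symm h | trivial⟩
  loopless := ⟨by rintro (a|a) h <;> first | exact G.irrefl h | exact H.irrefl h⟩

/-- The disjoint union of two simple graphs. -/
def graphSum {α β : Type*} (G : SimpleGraph α) (H : SimpleGraph β) :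
    SimpleGraph (α ⊕ β) where
  Adj x y := match x, y with
    | Sum.inl a, Sum.inl b => G.Adj a b
    | Sum.inr a, Sum.inr b => H.Adj a b
    | _, _ => False
  symm := ⟨by rintro (a|a) (b|b) h <;> first | exact G.adj_symm h | exact H.adj_symm h | trivial⟩
  loopless := ⟨by rintro (a|a) h <;> first | exact G.irrefl h | exact H.irrefl h⟩

/-- Disjoint union of blocks indexed by `ι`; block `i` has `r i` vertices and is a
clique when `P i` holds and a coclique (independent set) otherwise. -/
def blocksGraph {ι : Type*} (r : ι → ℕ) (P : ι → Prop) :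
    SimpleGraph (Σ i, Fin (r i)) where
  Adj x y := x ≠ y ∧ x.1 = y.1 ∧ P x.1
  symm := ⟨by rintro x y ⟨h1, h2, h3⟩; exact ⟨h1.symm, h2.symm, h2 ▸ h3⟩⟩
  loopless := ⟨fun x h => h.1 rfl⟩

section Aux
variable (r₁ r₂ r₃ : ℕ)

abbrev GG : SimpleGraph (Fin r₁ ⊕ (Fin r₂ ⊕ Fin r₃)) :=
  graphJoin (⊤ : SimpleGraph (Fin r₁)) (graphSum (⊤ : SimpleGraph (Fin r₂)) (⊤ : SimpleGraph (Fin r₃)))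

variable {r₁ r₂ r₃}

lemma adj_ll {a b : Fin r₁} (h : a ≠ b) : (GG r₁ r₂ r₃).Adj (.inl a) (.inl b) := h
lemma adj_lr (a : Fin r₁) (x : Fin r₂ ⊕ Fin r₃) : (GG r₁ r₂ r₃).Adj (.inl a) (.inr x) := trivial
lemma adj_rl (a : Fin r₁) (x : Fin r₂ ⊕ Fin r₃) : (GG r₁ r₂ r₃).Adj (.inr x) (.inl a) := trivial
lemma adj_r22 {a b : Fin r₂} (h : a ≠ b) : (GG r₁ r₂ r₃).Adj (.inr (.inl a)) (.inr (.inl b)) := h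
lemma adj_r33 {a b : Fin r₃} (h : a ≠ b) : (GG r₁ r₂ r₃).Adj (.inr (.inr a)) (.inr (.inr b)) := h
lemma not_adj_r23 (a : Fin r₂) (b : Fin r₃) : ¬ (GG r₁ r₂ r₃).Adj (.inr (.inl a)) (.inr (.inr b)) := id
lemma not_adj_r32 (a : Fin r₃) (b : Fin r₂) : ¬ (GG r₁ r₂ r₃).Adj (.inr (.inr a)) (.inr (.inl b)) := id

lemma dist_cross (h1 : 1 ≤ r₁) (a : Fin r₂) (b : Fin r₃) :
    (GG r₁ r₂ r₃).dist (.inr (.inl a)) (.inr (.inr b)) = 2 := by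
  let w : (GG r₁ r₂ r₃).Walk (.inr (.inl a)) (.inr (.inr b)) :=
    .cons (adj_rl ⟨0, h1⟩ _) (.cons (adj_lr _ _) .nil)
  have hle : (GG r₁ r₂ r₃).dist (.inr (.inl a)) (.inr (.inr b)) ≤ 2 :=
    SimpleGraph.dist_le w
  have h0 : (GG r₁ r₂ r₃).dist (.inr (.inl a)) (.inr (.inr b)) ≠ 0 := by
    rw [ne_eq, w.reachable.dist_eq_zero_iff]
    simp
  have hne1 : (GG r₁ r₂ r₃).dist (.inr (.inl a)) (.inr (.inr b)) ≠ 1 := by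
    rw [ne_eq, SimpleGraph.dist_eq_one_iff_adj]
    exact not_adj_r23 a b
  omega


lemma dist_adj {u v : Fin r₁ ⊕ (Fin r₂ ⊕ Fin r₃)} (h : (GG r₁ r₂ r₃).Adj u v) :
    (GG r₁ r₂ r₃).dist u v = 1 := SimpleGraph.dist_eq_one_iff_adj.mpr h

lemma dist_cross' (h1 : 1 ≤ r₁) (a : Fin r₃) (b : Fin r₂) :
    (GG r₁ r₂ r₃).dist (.inr (.inr a)) (.inr (.inl b)) = 2 := by
  rw [SimpleGraph.dist_comm]; exact dist_cross h1 b a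

lemma ecc_inl (h2 : 1 ≤ r₂) (a : Fin r₁) : ecc (GG r₁ r₂ r₃) (.inl a) = 1 := by
  apply le_antisymm
  · apply Finset.sup_le
    rintro (b | x) -
    · by_cases hab : a = b
      · subst hab; simp [SimpleGraph.dist_self]
      · exact le_of_eq (dist_adj (adj_ll hab))
    · exact le_of_eq (dist_adj (adj_lr a x))
  · calc (1 : ℕ) = (GG r₁ r₂ r₃).dist (.inl a) (.inr (.inl ⟨0, h2⟩)) :=
        (dist_adj (adj_lr _ _)).symm
      _ ≤ _ := Finset.le_sup (Finset.mem_univ _)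

lemma ecc_r2 (h1 : 1 ≤ r₁) (h3 : 1 ≤ r₃) (a : Fin r₂) :
    ecc (GG r₁ r₂ r₃) (.inr (.inl a)) = 2 := by
  apply le_antisymm
  · apply Finset.sup_le
    rintro (b | (b | b)) -
    · exact le_trans (le_of_eq (dist_adj (adj_rl b _))) one_le_two
    · by_cases hab : a = b
      · subst hab; simp [SimpleGraph.dist_self]
      · exact le_trans (le_of_eq (dist_adj (adj_r22 hab))) one_le_two
    · exact le_of_eq (dist_cross h1 a b)
  · calc (2 : ℕ) = (GG r₁ r₂ r₃).dist (.inr (.inl a)) (.inr (.inr ⟨0, h3⟩)) :=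
        (dist_cross h1 a _).symm
      _ ≤ _ := Finset.le_sup (Finset.mem_univ _)

lemma ecc_r3 (h1 : 1 ≤ r₁) (h2 : 1 ≤ r₂) (a : Fin r₃) :
    ecc (GG r₁ r₂ r₃) (.inr (.inr a)) = 2 := by
  apply le_antisymm
  · apply Finset.sup_le
    rintro (b | (b | b)) -
    · exact le_trans (le_of_eq (dist_adj (adj_rl b _))) one_le_two
    · exact le_of_eq (dist_cross' h1 a b)
    · by_cases hab : a = b
      · subst hab; simp [SimpleGraph.dist_self]
      · exact le_trans (le_of_eq (dist_adj (adj_r33 hab))) one_le_two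
  · calc (2 : ℕ) = (GG r₁ r₂ r₃).dist (.inr (.inr a)) (.inr (.inl ⟨0, h2⟩)) :=
        (dist_cross' h1 a _).symm
      _ ≤ _ := Finset.le_sup (Finset.mem_univ _)

def blk : Fin r₁ ⊕ (Fin r₂ ⊕ Fin r₃) → Fin 3
  | .inl _ => 0
  | .inr (.inl _) => 1
  | .inr (.inr _) => 2

lemma eccMatrix_eq (h1 : 1 ≤ r₁) (h2 : 1 ≤ r₂) (h3 : 1 ≤ r₃) :
    eccMatrix (GG r₁ r₂ r₃) = fun u v =>
      if u = v then 0 else (!![1,1,1;1,0,2;1,2,0] : Matrix (Fin 3) (Fin 3) ℝ) (blk u) (blk v) := by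
  ext u v
  rcases u with a | (a | a) <;> rcases v with b | (b | b) <;>
    simp only [eccMatrix, blk]
  · by_cases hab : a = b
    · subst hab; simp [SimpleGraph.dist_self, ecc_inl h2]
    · rw [dist_adj (adj_ll hab), ecc_inl h2, ecc_inl h2]
      simp [hab]
  · rw [dist_adj (adj_lr a _), ecc_inl h2, ecc_r2 h1 h3]; simp
  · rw [dist_adj (adj_lr a _), ecc_inl h2, ecc_r3 h1 h2]; simp
  · rw [dist_adj (adj_rl _ _), ecc_inl h2, ecc_r2 h1 h3]; simp
  · by_cases hab : a = b
    · subst hab; simp [SimpleGraph.dist_self, ecc_r2 h1 h3]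
    · rw [dist_adj (adj_r22 hab), ecc_r2 h1 h3, ecc_r2 h1 h3]
      simp [hab]
  · rw [dist_cross h1 a b, ecc_r2 h1 h3, ecc_r3 h1 h2]; simp
  · rw [dist_adj (adj_rl _ _), ecc_inl h2, ecc_r3 h1 h2]; simp [Matrix.vecHead, Matrix.vecTail]
  · rw [dist_cross' h1 a b, ecc_r3 h1 h2, ecc_r2 h1 h3]; simp
  · by_cases hab : a = b
    · subst hab; simp [SimpleGraph.dist_self, ecc_r3 h1 h2]
    · rw [dist_adj (adj_r33 hab), ecc_r3 h1 h2, ecc_r3 h1 h2]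
      simp [hab]

noncomputable def UU : Matrix (Fin r₁ ⊕ (Fin r₂ ⊕ Fin r₃)) (Fin 3) (RatFunc ℝ) :=
  fun u j => if blk u = j then 1 else 0

noncomputable def MM : Matrix (Fin 3) (Fin 3) (RatFunc ℝ) := !![1,1,1;1,0,2;1,2,0]

noncomputable def DD : Fin r₁ ⊕ (Fin r₂ ⊕ Fin r₃) → RatFunc ℝ :=
  fun u => if blk u = 0 then RatFunc.X + 1 else RatFunc.X

lemma hX1 : (RatFunc.X : RatFunc ℝ) + 1 ≠ 0 := by
  have : (RatFunc.X : RatFunc ℝ) + 1 = algebraMap (Polynomial ℝ) (RatFunc ℝ) (X + 1) := by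
    simp [map_add]
  rw [this]
  apply RatFunc.algebraMap_ne_zero
  intro h
  have := congrArg (fun p => p.coeff 0) h
  simp at this

lemma hDD : ∀ u : Fin r₁ ⊕ (Fin r₂ ⊕ Fin r₃), DD u ≠ 0 := by
  intro u
  unfold DD
  split
  · exact hX1
  · exact RatFunc.X_ne_zero

open Matrix in
lemma gram :
    (UU : Matrix (Fin r₁ ⊕ (Fin r₂ ⊕ Fin r₃)) (Fin 3) (RatFunc ℝ))ᵀ * (Matrix.diagonal fun u => (DD u)⁻¹ : Matrix (Fin r₁ ⊕ (Fin r₂ ⊕ Fin r₃)) _ _) * @UU r₁ r₂ r₃ =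
      Matrix.diagonal ![(r₁ : RatFunc ℝ) * (RatFunc.X + 1)⁻¹,
        (r₂ : RatFunc ℝ) * RatFunc.X⁻¹, (r₃ : RatFunc ℝ) * RatFunc.X⁻¹] := by
  ext j k
  rw [Matrix.mul_apply]
  simp only [Matrix.mul_diagonal, Matrix.transpose_apply]
  rw [Fintype.sum_sum_type]
  rw [Fintype.sum_sum_type]
  simp only [UU, DD, blk]
  fin_cases j <;> fin_cases k <;>
    simp [Matrix.diagonal, Finset.sum_const, nsmul_eq_mul, mul_comm]

open Matrix in
lemma UMU_apply (u v : Fin r₁ ⊕ (Fin r₂ ⊕ Fin r₃)) :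
    (UU * MM * UUᵀ) u v = MM (blk u) (blk v) := by
  simp only [Matrix.mul_apply, Matrix.transpose_apply, UU, ite_mul, one_mul, zero_mul,
    mul_ite, mul_one, mul_zero]
  simp [Finset.sum_ite_eq]

open Matrix in
lemma charmap_eq (h1 : 1 ≤ r₁) (h2 : 1 ≤ r₂) (h3 : 1 ≤ r₃) :
    (charmatrix (eccMatrix (GG r₁ r₂ r₃))).map (algebraMap (Polynomial ℝ) (RatFunc ℝ)) =
      Matrix.diagonal DD - UU * MM * UUᵀ := by
  rw [eccMatrix_eq h1 h2 h3]
  ext u v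
  rw [Matrix.map_apply, Matrix.sub_apply, UMU_apply]
  by_cases huv : u = v
  · subst huv
    erw [charmatrix_apply_eq, Matrix.diagonal_apply_eq]
    simp only [if_pos rfl, map_sub, map_zero, RatFunc.algebraMap_X, sub_zero]
    rcases u with a | (a | a) <;> simp [DD, blk, MM]
  · erw [charmatrix_apply_ne _ _ _ huv, Matrix.diagonal_apply_ne _ huv]
    simp only [if_neg huv, zero_sub, neg_inj]
    rcases u with a | (a | a) <;> rcases v with b | (b | b) <;>
      simp [blk, MM, RatFunc.algebraMap_C, map_ofNat, Matrix.vecHead, Matrix.vecTail]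

open Matrix in
lemma det_eq (h1 : 1 ≤ r₁) (h2 : 1 ≤ r₂) (h3 : 1 ≤ r₃) :
    ((charmatrix (eccMatrix (GG r₁ r₂ r₃))).map (algebraMap (Polynomial ℝ) (RatFunc ℝ))).det =
      ((RatFunc.X + 1) ^ r₁ * RatFunc.X ^ (r₂ + r₃)) *
        (((RatFunc.X + 1)⁻¹ * RatFunc.X⁻¹ * RatFunc.X⁻¹) *
          (Matrix.diagonal ![RatFunc.X + 1, RatFunc.X, RatFunc.X] -
            Matrix.diagonal ![(r₁ : RatFunc ℝ), (r₂ : RatFunc ℝ), (r₃ : RatFunc ℝ)] * MM).det) := by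
  rw [charmap_eq h1 h2 h3]
  have hDE : (Matrix.diagonal DD : Matrix (Fin r₁ ⊕ (Fin r₂ ⊕ Fin r₃)) _ _) *
      Matrix.diagonal (fun u => (DD u)⁻¹) = 1 := by
    have hf : (fun u : Fin r₁ ⊕ (Fin r₂ ⊕ Fin r₃) => DD u * (DD u)⁻¹) =
        fun _ => (1 : RatFunc ℝ) := funext fun u => mul_inv_cancel₀ (hDD u)
    rw [Matrix.diagonal_mul_diagonal, hf, Matrix.diagonal_one]
  have key : (Matrix.diagonal DD : Matrix (Fin r₁ ⊕ (Fin r₂ ⊕ Fin r₃)) _ _) - UU * MM * (@UU r₁ r₂ r₃)ᵀ =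
      Matrix.diagonal DD * (1 - Matrix.diagonal (fun u => (DD u)⁻¹) * (UU * MM * (@UU r₁ r₂ r₃)ᵀ)) := by
    rw [mul_sub, mul_one, ← mul_assoc, hDE, one_mul]
  rw [key, Matrix.det_mul]
  congr 1
  · rw [Matrix.det_diagonal, Fintype.prod_sum_type, Fintype.prod_sum_type]
    simp [DD, blk, pow_add]
  · have h4 : (Matrix.diagonal (fun u => (DD u)⁻¹) : Matrix (Fin r₁ ⊕ (Fin r₂ ⊕ Fin r₃)) _ _) * (UU * MM * (@UU r₁ r₂ r₃)ᵀ) =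
        ((Matrix.diagonal (fun u => (DD u)⁻¹) : Matrix (Fin r₁ ⊕ (Fin r₂ ⊕ Fin r₃)) _ _) * @UU r₁ r₂ r₃ * MM) * (@UU r₁ r₂ r₃)ᵀ := by
      simp only [Matrix.mul_assoc]
    rw [h4, Matrix.det_one_sub_mul_comm]
    have h5 : (@UU r₁ r₂ r₃)ᵀ * ((Matrix.diagonal (fun u => (DD u)⁻¹) : Matrix (Fin r₁ ⊕ (Fin r₂ ⊕ Fin r₃)) _ _) * @UU r₁ r₂ r₃ * MM) =
        ((@UU r₁ r₂ r₃)ᵀ * (Matrix.diagonal (fun u => (DD u)⁻¹) : Matrix (Fin r₁ ⊕ (Fin r₂ ⊕ Fin r₃)) _ _) * @UU r₁ r₂ r₃) * MM := by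
      simp only [Matrix.mul_assoc]
    rw [h5, _root_.gram]
    have h6 : (1 : Matrix (Fin 3) (Fin 3) (RatFunc ℝ)) -
        Matrix.diagonal ![(r₁ : RatFunc ℝ) * (RatFunc.X + 1)⁻¹,
          (r₂ : RatFunc ℝ) * RatFunc.X⁻¹, (r₃ : RatFunc ℝ) * RatFunc.X⁻¹] * MM =
        Matrix.diagonal ![(RatFunc.X + 1)⁻¹, RatFunc.X⁻¹, RatFunc.X⁻¹] *
          (Matrix.diagonal ![RatFunc.X + 1, RatFunc.X, RatFunc.X] -
            Matrix.diagonal ![(r₁ : RatFunc ℝ), (r₂ : RatFunc ℝ), (r₃ : RatFunc ℝ)] * MM) := by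
      rw [Matrix.mul_sub, ← Matrix.mul_assoc, Matrix.diagonal_mul_diagonal,
        Matrix.diagonal_mul_diagonal]
      congr 1
      · have hf : (fun i => ![(RatFunc.X + 1)⁻¹, RatFunc.X⁻¹, RatFunc.X⁻¹] i *
            ![RatFunc.X + 1, RatFunc.X, RatFunc.X] i) = fun _ => (1 : RatFunc ℝ) := by
          funext i
          fin_cases i <;>
            simp [inv_mul_cancel₀ hX1, inv_mul_cancel₀ (RatFunc.X_ne_zero (K := ℝ))]
        rw [hf, Matrix.diagonal_one]
      · have hg : (fun i => ![(RatFunc.X + 1)⁻¹, RatFunc.X⁻¹, RatFunc.X⁻¹] i *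
            ![(r₁ : RatFunc ℝ), (r₂ : RatFunc ℝ), (r₃ : RatFunc ℝ)] i) =
            ![(r₁ : RatFunc ℝ) * (RatFunc.X + 1)⁻¹, (r₂ : RatFunc ℝ) * RatFunc.X⁻¹,
              (r₃ : RatFunc ℝ) * RatFunc.X⁻¹] := by
          funext i; fin_cases i <;> simp [mul_comm]
        rw [hg]
    rw [h6, Matrix.det_mul, Matrix.det_diagonal, Fin.prod_univ_three]
    simp
end Aux

set_option maxHeartbeats 2000000 in
/-- the characteristic polynomial of the eccentricity matrix of the join of
`K_{r₁}` with `K_{r₂} ⊔ K_{r₃}`. -/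
theorem stmt10 (r₁ r₂ r₃ : ℕ) (h1 : 1 ≤ r₁) (h2 : 1 ≤ r₂) (h3 : 1 ≤ r₃) :
    (eccMatrix (graphJoin (⊤ : SimpleGraph (Fin r₁))
        (graphSum (⊤ : SimpleGraph (Fin r₂)) (⊤ : SimpleGraph (Fin r₃))))).charpoly =
      X ^ (r₂ + r₃ - 2) * (X + C 1) ^ (r₁ - 1) *
        (X ^ 3 - C ((r₁ : ℝ) - 1) * X ^ 2
          - C ((r₁ : ℝ) * (r₂ : ℝ) + (r₁ : ℝ) * (r₃ : ℝ) + 4 * (r₂ : ℝ) * (r₃ : ℝ)) * X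
          - C (4 * (r₂ : ℝ) * (r₃ : ℝ))) := by
  obtain ⟨k₁, rfl⟩ : ∃ k, r₁ = k + 1 := ⟨r₁ - 1, by omega⟩
  obtain ⟨k₂, rfl⟩ : ∃ k, r₂ = k + 1 := ⟨r₂ - 1, by omega⟩
  obtain ⟨k₃, rfl⟩ : ∃ k, r₃ = k + 1 := ⟨r₃ - 1, by omega⟩
  apply RatFunc.algebraMap_injective ℝ
  unfold Matrix.charpoly
  rw [RingHom.map_det, RingHom.mapMatrix_apply, det_eq h1 h2 h3, Matrix.det_fin_three]
  have e1 : k₁ + 1 - 1 = k₁ := by omega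
  have e2 : (k₂ + 1) + (k₃ + 1) - 2 = k₂ + k₃ := by omega
  rw [e1, e2]
  simp only [map_mul, map_pow, map_sub, map_add, map_one, RatFunc.algebraMap_C,
    RatFunc.algebraMap_X, map_natCast, map_ofNat, Matrix.sub_apply, Matrix.one_apply,
    Matrix.diagonal_mul, MM]
  norm_num [Matrix.vecHead, Matrix.vecTail, Matrix.diagonal_apply]
  push_cast
  have hx : (RatFunc.X : RatFunc ℝ) ≠ 0 := RatFunc.X_ne_zero
  have hx1 : (RatFunc.X : RatFunc ℝ) + 1 ≠ 0 := hX1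
  field_simp
  ring
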